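/- For all n ≥ 1, the signed Eulerian polynomial identity holds: ∑_{w ∈ S_n} sgn(w) t^{des(w)+1} = (1-t)^{n+1} ∑_{k ≥ 1} k^{⌈n/2⌉} t^k as formal power series in t. -/

import Mathlib

open scoped Classical

/-- Number of descents of a permutation of `{0,…,n-1}`. -/
noncomputable def desA {n : ℕ} (w : Equiv.Perm (Fin n)) : ℕ :=
  ((Finset.range (n - 1)).filter (fun i =>
    ∃ h : i + 1 < n, w ⟨i + 1, h⟩ < w ⟨i, Nat.lt_of_succ_lt h⟩)).card

namespace SE

open Finset Equiv Equiv.Perm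


lemma sign_eq_signAux {n : ℕ} (f : Perm (Fin n)) : sign f = signAux f := by
  refine Equiv.Perm.swap_induction_on f (by simp [signAux_one]) (fun f x y hxy ih => ?_)
  rw [Equiv.Perm.sign_mul, sign_swap hxy, signAux_mul, signAux_swap hxy, ih]

/-- product over pairs j < i of -1 if g j > g i -/
noncomputable def invProd {n K : ℕ} (g : Fin n → Fin K) : ℤˣ :=
  ∏ x ∈ finPairsLT n, if g x.2 ≤ g x.1 then 1 else -1

lemma sign_sort_eq_invProd {n K : ℕ} (g : Fin n → Fin K) :
    sign (Tuple.sort g) = invProd g := by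
  classical
  set σ := Tuple.sort g with hσ
  have hkey : StrictMono (σ.trans <| Tuple.graphEquiv₁ g) := by
    rw [← Tuple.eq_sort_iff']
  have hlex : ∀ {i j : Fin n}, i < j → g (σ i) < g (σ j) ∨ (g (σ i) = g (σ j) ∧ σ i < σ j) := by
    intro i j hij
    have := hkey hij
    rcases Prod.Lex.lt_iff.1 this with h | h
    · exact Or.inl h
    · exact Or.inr h
  rw [sign_eq_signAux, signAux, invProd]
  refine Finset.prod_nbij' (fun x => if σ x.1 < σ x.2 then ⟨σ x.2, σ x.1⟩ else ⟨σ x.1, σ x.2⟩)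
    (fun y => if σ⁻¹ y.1 < σ⁻¹ y.2 then ⟨σ⁻¹ y.2, σ⁻¹ y.1⟩ else ⟨σ⁻¹ y.1, σ⁻¹ y.2⟩)
    ?_ ?_ ?_ ?_ ?_
  · rintro ⟨i, j⟩ hx
    have hji : j < i := mem_finPairsLT.1 hx
    by_cases h : σ i < σ j
    · rw [if_pos h]; exact mem_finPairsLT.2 h
    · have hlt : σ j < σ i := lt_of_le_of_ne (not_lt.1 h) (fun e => (σ.injective e ▸ hji).false)
      rw [if_neg h]; exact mem_finPairsLT.2 hlt
  · rintro ⟨a, b⟩ hy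
    have hba : b < a := mem_finPairsLT.1 hy
    by_cases h : σ⁻¹ a < σ⁻¹ b
    · rw [if_pos h]; exact mem_finPairsLT.2 h
    · have hlt : σ⁻¹ b < σ⁻¹ a := lt_of_le_of_ne (not_lt.1 h)
        (fun e => ((σ⁻¹ : Perm (Fin n)).injective e ▸ hba).false)
      rw [if_neg h]; exact mem_finPairsLT.2 hlt
  · rintro ⟨i, j⟩ hx
    have hji : j < i := mem_finPairsLT.1 hx
    by_cases h : σ i < σ j
    · rw [if_pos h]
      have h1 : σ⁻¹ (σ j) < σ⁻¹ (σ i) := by simpa using hji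
      rw [if_pos h1]; simp
    · rw [if_neg h]
      have h1 : ¬ σ⁻¹ (σ i) < σ⁻¹ (σ j) := by simpa using hji.not_gt
      rw [if_neg h1]; simp
  · rintro ⟨a, b⟩ hy
    have hba : b < a := mem_finPairsLT.1 hy
    by_cases h : σ⁻¹ a < σ⁻¹ b
    · rw [if_pos h]
      have h1 : σ (σ⁻¹ b) < σ (σ⁻¹ a) := by simpa using hba
      rw [if_pos h1]; simp
    · rw [if_neg h]
      have h1 : ¬ σ (σ⁻¹ a) < σ (σ⁻¹ b) := by simpa using hba.not_gt
      rw [if_neg h1]; simp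
  · rintro ⟨i, j⟩ hx
    have hji : j < i := mem_finPairsLT.1 hx
    by_cases h : σ i < σ j
    · rw [if_pos h, if_pos h.le]
      have hl : g (σ j) < g (σ i) := by
        rcases hlex hji with hl | ⟨he, hlt⟩
        · exact hl
        · exact absurd hlt h.asymm
      rw [if_neg (not_le.2 hl)]
    · have hσlt : σ j < σ i := lt_of_le_of_ne (not_lt.1 h) (fun e => (σ.injective e ▸ hji).false)
      have hle : g (σ j) ≤ g (σ i) := by
        rcases hlex hji with hl | ⟨he, hlt⟩
        · exact hl.le
        · exact he.le
      rw [if_neg h, if_neg (not_le.2 hσlt), if_pos hle]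



variable {n K : ℕ}

def flipIdx (p : Fin n) : Fin n :=
  if h : 2 * (p.val / 2) + (1 - p.val % 2) < n then ⟨2 * (p.val / 2) + (1 - p.val % 2), h⟩ else p

/-- value of flipIdx -/
lemma flipIdx_val (p : Fin n) :
    (flipIdx p).val = if 2 * (p.val / 2) + (1 - p.val % 2) < n
      then 2 * (p.val / 2) + (1 - p.val % 2) else p.val := by
  unfold flipIdx; split_ifs <;> rfl

lemma flipIdx_val_div (p : Fin n) : (flipIdx p).val / 2 = p.val / 2 := by
  have hp := p.isLt
  rw [flipIdx_val]; split_ifs with h <;> omega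

lemma flipIdx_flipIdx (p : Fin n) : flipIdx (flipIdx p) = p := by
  have hp := p.isLt
  have h2 := (flipIdx p).isLt
  apply Fin.ext
  rw [flipIdx_val, flipIdx_val p]
  split_ifs <;> omega

lemma flipIdx_lt {p q : Fin n} (h : p.val / 2 < q.val / 2) : flipIdx p < flipIdx q := by
  have h1 := flipIdx_val_div p; have h2 := flipIdx_val_div q
  rw [Fin.lt_iff_val_lt_val]; omega

lemma flipIdx_fix {p : Fin n} (h : flipIdx p = p) : p.val + 1 = n := by
  have hp := p.isLt
  have := congrArg Fin.val h
  rw [flipIdx_val] at this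
  split_ifs at this <;> omega

lemma flipIdx_succ {p : Fin n} (h : p < flipIdx p) : (flipIdx p).val = p.val + 1 := by
  have hp := p.isLt
  rw [Fin.lt_iff_val_lt_val] at h
  rw [flipIdx_val] at *
  split_ifs at * <;> omega
/-- `g` takes equal values on each block `{2b, 2b+1}`. -/
def Paired (g : Fin n → Fin K) : Prop := ∀ p, g (flipIdx p) = g p

lemma sameblock_flip {a b : Fin n} (hba : b < a) (hblk : b.val / 2 = a.val / 2) :
    flipIdx b = a ∧ flipIdx a = b := by
  have ha := a.isLt
  have hb := b.isLt
  rw [Fin.lt_iff_val_lt_val] at hba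
  constructor <;> (apply Fin.ext; rw [flipIdx_val]; split_ifs <;> omega)

lemma paired_invProd {g : Fin n → Fin K} (hg : Paired g) : invProd g = 1 := by
  classical
  unfold invProd
  refine Finset.prod_involution
    (fun y _ => if (flipIdx y.2).val < (flipIdx y.1).val then ⟨flipIdx y.1, flipIdx y.2⟩ else y)
    ?_ ?_ ?_ ?_
  · rintro ⟨a, b⟩ hy
    dsimp only
    have hba : b < a := mem_finPairsLT.1 hy
    by_cases hblk : b.val / 2 = a.val / 2
    · obtain ⟨hfb, hfa⟩ := sameblock_flip hba hblk
      have hcond : ¬ (flipIdx b).val < (flipIdx a).val := by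
        rw [hfb, hfa]; rw [Fin.lt_iff_val_lt_val] at hba; omega
      rw [if_neg hcond]
      have geq : g a = g b := by rw [← hfb]; exact hg b
      rw [geq, if_pos le_rfl, one_mul]
    · have hlt : b.val / 2 < a.val / 2 := by
        rw [Fin.lt_iff_val_lt_val] at hba
        exact lt_of_le_of_ne (Nat.div_le_div_right hba.le) hblk
      have hord : (flipIdx b).val < (flipIdx a).val := flipIdx_lt hlt
      rw [if_pos hord]
      dsimp only
      rw [hg a, hg b]
      by_cases hle : g b ≤ g a
      · rw [if_pos hle, one_mul]
      · rw [if_neg hle]; norm_num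
  · rintro ⟨a, b⟩ hy hf
    dsimp only
    have hba : b < a := mem_finPairsLT.1 hy
    by_cases hblk : b.val / 2 = a.val / 2
    · exfalso
      obtain ⟨hfb, hfa⟩ := sameblock_flip hba hblk
      have geq : g a = g b := by rw [← hfb]; exact hg b
      rw [geq, if_pos le_rfl] at hf
      exact hf rfl
    · have hlt : b.val / 2 < a.val / 2 := by
        rw [Fin.lt_iff_val_lt_val] at hba
        exact lt_of_le_of_ne (Nat.div_le_div_right hba.le) hblk
      have hord : (flipIdx b).val < (flipIdx a).val := flipIdx_lt hlt
      rw [if_pos hord]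
      intro he
      rw [Sigma.ext_iff] at he
      have h1 : flipIdx a = a := he.1
      have h2 : flipIdx b = b := eq_of_heq he.2
      have := flipIdx_fix h1
      have := flipIdx_fix h2
      rw [Fin.lt_iff_val_lt_val] at hba; omega
  · rintro ⟨a, b⟩ hy
    dsimp only
    have hba : b < a := mem_finPairsLT.1 hy
    by_cases hblk : b.val / 2 = a.val / 2
    · obtain ⟨hfb, hfa⟩ := sameblock_flip hba hblk
      have hcond : ¬ (flipIdx b).val < (flipIdx a).val := by
        rw [hfb, hfa]; rw [Fin.lt_iff_val_lt_val] at hba; omega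
      rw [if_neg hcond]; exact hy
    · have hlt : b.val / 2 < a.val / 2 := by
        rw [Fin.lt_iff_val_lt_val] at hba
        exact lt_of_le_of_ne (Nat.div_le_div_right hba.le) hblk
      have hord : (flipIdx b).val < (flipIdx a).val := flipIdx_lt hlt
      rw [if_pos hord]
      exact mem_finPairsLT.2 (by rw [Fin.lt_iff_val_lt_val]; exact hord)
  · rintro ⟨a, b⟩ hy
    dsimp only
    have hba : b < a := mem_finPairsLT.1 hy
    by_cases hblk : b.val / 2 = a.val / 2
    · obtain ⟨hfb, hfa⟩ := sameblock_flip hba hblk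
      have hcond : ¬ (flipIdx b).val < (flipIdx a).val := by
        rw [hfb, hfa]; rw [Fin.lt_iff_val_lt_val] at hba; omega
      simp only [if_neg hcond]
    · have hlt : b.val / 2 < a.val / 2 := by
        rw [Fin.lt_iff_val_lt_val] at hba
        exact lt_of_le_of_ne (Nat.div_le_div_right hba.le) hblk
      have hord : (flipIdx b).val < (flipIdx a).val := flipIdx_lt hlt
      simp only [if_pos hord]
      have hcond2 : (flipIdx (flipIdx b)).val < (flipIdx (flipIdx a)).val := by
        rw [flipIdx_flipIdx, flipIdx_flipIdx]
        rw [Fin.lt_iff_val_lt_val] at hba; exact hba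
      rw [if_pos hcond2, flipIdx_flipIdx, flipIdx_flipIdx]




lemma swap_adj_lt {x y a b : Fin n} (hxy : (y : ℕ) = (x : ℕ) + 1) (hab : a < b)
    (hne : ¬(a = x ∧ b = y)) : swap x y a < swap x y b := by
  rw [Equiv.swap_apply_def, Equiv.swap_apply_def]
  rw [Fin.lt_iff_val_lt_val] at hab ⊢
  split_ifs <;> simp_all [Fin.ext_iff] <;> omega

lemma sort_comp_swap {g : Fin n → Fin K} {x y : Fin n} (hxy : (y : ℕ) = (x : ℕ) + 1)
    (hne : g x ≠ g y) :
    Tuple.sort (g ∘ (swap x y)) = (Tuple.sort g).trans (swap x y) := by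
  classical
  set σ := Tuple.sort g with hσ
  have hstab := (Tuple.eq_sort_iff.1 hσ)
  refine (Tuple.eq_sort_iff.2 ⟨?_, ?_⟩).symm
  · have he : ((g ∘ (swap x y)) ∘ (σ.trans (swap x y))) = g ∘ σ := by
      funext i
      simp [Equiv.trans_apply, Equiv.swap_apply_self]
    rw [he]
    exact Tuple.monotone_sort g
  · intro i j hij hvals
    have hv : ∀ k, (g ∘ (swap x y)) ((σ.trans (swap x y)) k) = g (σ k) := by
      intro k; simp [Equiv.trans_apply, Equiv.swap_apply_self]
    rw [hv i, hv j] at hvals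
    have hlt : σ i < σ j := hstab.2 i j hij hvals
    simp only [Equiv.trans_apply]
    refine swap_adj_lt hxy hlt ?_
    rintro ⟨h1, h2⟩
    exact hne (by rw [← h1, ← h2, hvals])

lemma sign_sort_comp_swap {g : Fin n → Fin K} {x y : Fin n} (hxy : (y : ℕ) = (x : ℕ) + 1)
    (hne : g x ≠ g y) :
    sign (Tuple.sort (g ∘ (swap x y))) = - sign (Tuple.sort g) := by
  rw [sort_comp_swap hxy hne]
  have : (Tuple.sort g).trans (swap x y) = (swap x y) * (Tuple.sort g) := rfl
  rw [this, Equiv.Perm.sign_mul, sign_swap (fun h => by rw [h] at hxy; omega)]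
  rw [neg_one_mul]

noncomputable def eps (g : Fin n → Fin K) : ℚ := ((sign (Tuple.sort g) : ℤ) : ℚ)

lemma eps_paired {g : Fin n → Fin K} (hg : Paired g) : eps g = 1 := by
  unfold eps
  rw [sign_sort_eq_invProd, paired_invProd hg]
  simp

noncomputable def badSet (g : Fin n → Fin K) : Finset (Fin n) :=
  univ.filter (fun p => g (flipIdx p) ≠ g p)


lemma badSet_comp_swap {g : Fin n → Fin K} {p₀ : Fin n} (hlt : p₀ < flipIdx p₀) :
    badSet (g ∘ (swap p₀ (flipIdx p₀))) = badSet g := by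
  have hsucc := flipIdx_succ hlt
  have hp := p₀.isLt
  have hf := (flipIdx p₀).isLt
  have hfp := flipIdx_val_div p₀
  have hpar : p₀.val % 2 = 0 := by
    have h := flipIdx_val p₀
    split_ifs at h <;> omega
  ext q
  have hq := q.isLt
  simp only [badSet, mem_filter, mem_univ, true_and, Function.comp_apply]
  by_cases hblk : q.val / 2 = p₀.val / 2
  · have hq2 : q = p₀ ∨ q = flipIdx p₀ := by
      rcases Nat.lt_or_ge q.val p₀.val with h | h
      · exfalso; omega
      · rcases Nat.eq_or_lt_of_le h with h' | h'
        · exact Or.inl (Fin.ext h'.symm)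
        · right; apply Fin.ext; omega
    rcases hq2 with rfl | rfl
    · rw [Equiv.swap_apply_left, Equiv.swap_apply_right]
      exact ne_comm
    · rw [flipIdx_flipIdx, Equiv.swap_apply_left, Equiv.swap_apply_right]
      exact ne_comm
  · have hfq := flipIdx_val_div q
    have hne1 : q ≠ p₀ := fun h => hblk (by rw [h])
    have hne2 : q ≠ flipIdx p₀ := fun h => hblk (by rw [h]; omega)
    have hne3 : flipIdx q ≠ p₀ := fun h => hblk (by rw [← hfq, h])
    have hne4 : flipIdx q ≠ flipIdx p₀ := fun h => hblk (by
      have : (flipIdx q).val = p₀.val + 1 := by rw [h]; exact hsucc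
      omega)
    rw [Equiv.swap_apply_of_ne_of_ne hne1 hne2, Equiv.swap_apply_of_ne_of_ne hne3 hne4]

lemma not_paired_iff {g : Fin n → Fin K} : ¬ Paired g ↔ (badSet g).Nonempty := by
  unfold Paired badSet
  simp [Finset.filter_nonempty_iff]

theorem sum_eps (hn : 1 ≤ n) (K : ℕ) :
    ∑ g : Fin n → Fin K, eps g = (K : ℚ) ^ ((n + 1) / 2) := by
  classical
  rw [← Finset.sum_filter_add_sum_filter_not univ (fun g : Fin n → Fin K => Paired g)]
  have h2 : ∑ g ∈ univ.filter (fun g : Fin n → Fin K => ¬ Paired g), eps g = 0 := by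
    have key : ∀ g : Fin n → Fin K, ∀ hne : (badSet g).Nonempty,
        ((badSet g).min' hne) < flipIdx ((badSet g).min' hne) ∧
        g (((badSet g).min' hne)) ≠ g (flipIdx ((badSet g).min' hne)) := by
      intro g hne
      set p₀ := (badSet g).min' hne with hp₀
      have hmem : p₀ ∈ badSet g := Finset.min'_mem _ _
      have hval : g (flipIdx p₀) ≠ g p₀ := by
        simpa [badSet] using hmem
      have hne2 : p₀ ≠ flipIdx p₀ := by
        intro h; rw [← h] at hval; exact hval rfl
      have hmem2 : flipIdx p₀ ∈ badSet g := by
        simp only [badSet, mem_filter, mem_univ, true_and, flipIdx_flipIdx]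
        exact fun h => hval h.symm
      exact ⟨lt_of_le_of_ne (Finset.min'_le _ _ hmem2) hne2, fun h => hval h.symm⟩
    refine Finset.sum_involution
      (fun g hg => g ∘ (swap ((badSet g).min' (not_paired_iff.1 (by simpa using hg)))
        (flipIdx ((badSet g).min' (not_paired_iff.1 (by simpa using hg)))))) ?_ ?_ ?_ ?_
    · intro g hg
      obtain ⟨hlt, hne⟩ := key g (not_paired_iff.1 (by simpa using hg))
      rw [show eps (g ∘ (swap _ _)) = _ from rfl]
      unfold eps
      rw [sign_sort_comp_swap (flipIdx_succ hlt) hne]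
      push_cast [Units.val_neg]
      ring
    · intro g hg hne0
      obtain ⟨hlt, hne⟩ := key g (not_paired_iff.1 (by simpa using hg))
      intro h
      have := congrFun h ((badSet g).min' (not_paired_iff.1 (by simpa using hg)))
      rw [Function.comp_apply, Equiv.swap_apply_left] at this
      exact hne this.symm
    · intro g hg
      obtain ⟨hlt, hne⟩ := key g (not_paired_iff.1 (by simpa using hg))
      simp only [mem_filter, mem_univ, true_and] at hg ⊢
      rw [not_paired_iff, badSet_comp_swap hlt]
      exact not_paired_iff.1 hg
    · intro g hg
      obtain ⟨hlt, hne⟩ := key g (not_paired_iff.1 (by simpa using hg))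
      have hbs : badSet (g ∘ (swap ((badSet g).min' (not_paired_iff.1 (by simpa using hg)))
          (flipIdx ((badSet g).min' (not_paired_iff.1 (by simpa using hg)))))) = badSet g :=
        badSet_comp_swap hlt
      simp only [hbs]
      funext q
      simp [Equiv.swap_apply_self]
  have h1 : ∑ g ∈ univ.filter (fun g : Fin n → Fin K => Paired g), eps g
      = (K : ℚ) ^ ((n + 1) / 2) := by
    rw [Finset.sum_congr rfl (fun g hg => eps_paired (Finset.mem_filter.1 hg).2)]
    rw [Finset.sum_const]
    have hcard : (univ.filter (fun g : Fin n → Fin K => Paired g)).card = K ^ ((n + 1) / 2) := by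
      have hcu : (univ : Finset (Fin ((n+1)/2) → Fin K)).card = K ^ ((n+1)/2) := by
        rw [Finset.card_univ]
        rw [Fintype.card_fun]
        simp
      rw [← hcu]
      refine Finset.card_nbij'
        (fun g => fun j => g ⟨2 * j.val, by have := j.isLt; omega⟩)
        (fun h => fun p => h ⟨p.val / 2, by have := p.isLt; omega⟩) ?_ ?_ ?_ ?_
      · intro g hg; exact mem_univ _
      · intro h _
        simp only [Finset.mem_coe, mem_filter, mem_univ, true_and]
        intro p
        dsimp only
        exact congrArg h (Fin.ext (flipIdx_val_div p))
      · intro g hg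
        have hgp : Paired g := (Finset.mem_filter.1 hg).2
        funext p
        dsimp only
        by_cases hpar : p.val % 2 = 0
        · congr 1; apply Fin.ext; show 2 * (p.val / 2) = p.val; omega
        · have hflip : flipIdx p = ⟨2 * (p.val / 2), by have := p.isLt; omega⟩ := by
            apply Fin.ext
            show (flipIdx p).val = 2 * (p.val / 2)
            rw [flipIdx_val]
            have := p.isLt
            split_ifs <;> omega
          rw [show (⟨2 * (p.val / 2), by have := p.isLt; omega⟩ : Fin n) = flipIdx p from
            hflip.symm]
          exact hgp p
      · intro h _
        funext j
        dsimp only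
        congr 1
        apply Fin.ext
        show 2 * j.val / 2 = j.val
        omega
    rw [hcard]
    simp
  rw [h1, h2, add_zero]





def desP (w : Perm (Fin n)) (i : ℕ) : Prop :=
  ∃ h : i + 1 < n, w ⟨i + 1, h⟩ < w ⟨i, Nat.lt_of_succ_lt h⟩

noncomputable def dcnt (w : Perm (Fin n)) (i : ℕ) : ℕ :=
  ((Finset.range i).filter (desP w)).card

lemma desA_eq_dcnt (w : Perm (Fin n)) : desA w = dcnt w (n - 1) := by
  unfold desA dcnt desP
  congr 1
  ext x
  simp [Finset.mem_filter]

lemma dcnt_mono (w : Perm (Fin n)) {i j : ℕ} (h : i ≤ j) : dcnt w i ≤ dcnt w j :=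
  Finset.card_le_card (Finset.filter_subset_filter _ (by
    intro x hx; simp only [Finset.mem_range] at *; omega))

lemma dcnt_le (w : Perm (Fin n)) (i : ℕ) : dcnt w i ≤ i := by
  calc ((Finset.range i).filter (desP w)).card ≤ (Finset.range i).card :=
        Finset.card_filter_le _ _
    _ = i := Finset.card_range i

lemma dcnt_succ (w : Perm (Fin n)) (i : ℕ) :
    dcnt w (i + 1) = dcnt w i + (if desP w i then 1 else 0) := by
  unfold dcnt
  rw [Finset.range_add_one, Finset.filter_insert]
  split_ifs with h
  · rw [Finset.card_insert_of_notMem (by simp)]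
  · rfl

lemma dcnt_add_le (w : Perm (Fin n)) (i t : ℕ) : dcnt w (i + t) ≤ dcnt w i + t := by
  induction t with
  | zero => simp
  | succ t ih => rw [show i + (t+1) = (i + t) + 1 by omega, dcnt_succ]; split_ifs <;> omega

/-- no descent in `[i, i+t)` implies `w` increasing there -/
lemma w_chain (w : Perm (Fin n)) :
    ∀ (t : ℕ) (i : Fin n) (h : i.val + t < n),
      (∀ k, i.val ≤ k → k < i.val + t → ¬ desP w k) → w i ≤ w ⟨i.val + t, h⟩ := by
  intro t
  induction t with
  | zero => intro i h _; exact le_of_eq (congrArg w (Fin.ext (by simp)))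
  | succ t ih =>
    intro i h hnd
    have h' : i.val + t < n := by omega
    have h1 : w i ≤ w ⟨i.val + t, h'⟩ := ih i h' (fun k hk1 hk2 => hnd k hk1 (by omega))
    have h2 : ¬ desP w (i.val + t) := hnd _ (by omega) (by omega)
    have h3 : w ⟨i.val + t, h'⟩ ≤ w ⟨i.val + (t+1), h⟩ := by
      by_contra hc
      exact h2 ⟨by omega, by
        have : w ⟨i.val + t + 1, by omega⟩ < w ⟨i.val + t, by omega⟩ := lt_of_not_ge hc
        convert this using 2 <;> omega⟩
    exact le_trans h1 h3

lemma w_chain_lt (w : Perm (Fin n)) {i j : Fin n} (hij : i < j)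
    (hnd : ∀ k, i.val ≤ k → k < j.val → ¬ desP w k) : w i < w j := by
  have h : i.val + (j.val - i.val) < n := by have := j.isLt; omega
  have hj : (⟨i.val + (j.val - i.val), h⟩ : Fin n) = j := Fin.ext (by
    show i.val + (j.val - i.val) = j.val
    rw [Fin.lt_iff_val_lt_val] at hij; omega)
  have := w_chain w (j.val - i.val) i h (fun k h1 h2 => hnd k h1 (by omega))
  rw [hj] at this
  rcases lt_or_eq_of_le this with h' | h'
  · exact h'
  · exfalso
    have := w.injective h'
    rw [this] at hij
    exact lt_irrefl _ hij

noncomputable def Comp (w : Perm (Fin n)) (K : ℕ) : Finset (Fin n → Fin K) :=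
  univ.filter (fun a => Monotone a ∧ ∀ (i : ℕ) (h : i + 1 < n),
    w ⟨i + 1, h⟩ < w ⟨i, Nat.lt_of_succ_lt h⟩ →
      a ⟨i, Nat.lt_of_succ_lt h⟩ < a ⟨i + 1, h⟩)

lemma fiber_card (w : Perm (Fin n)) (K : ℕ) :
    ((univ : Finset (Fin n → Fin K)).filter (fun g => Tuple.sort g = w)).card
      = (Comp w K).card := by
  refine Finset.card_nbij' (fun g => g ∘ ⇑w) (fun a => a ∘ ⇑w⁻¹) ?_ ?_ ?_ ?_
  · intro g hg
    have hw : Tuple.sort g = w := (Finset.mem_filter.1 hg).2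
    simp only [Comp, Finset.mem_coe, Finset.mem_filter, Finset.mem_univ, true_and]
    constructor
    · have := Tuple.monotone_sort g
      rwa [hw] at this
    · intro i h hdes
      have hlt : (⟨i, Nat.lt_of_succ_lt h⟩ : Fin n) < ⟨i + 1, h⟩ := by
        rw [Fin.lt_iff_val_lt_val]; show i < i + 1; omega
      have hmono := Tuple.monotone_sort g
      rw [hw] at hmono
      rcases lt_or_eq_of_le (hmono hlt.le) with h' | h'
      · exact h'
      · exfalso
        have hstab := (Tuple.eq_sort_iff.1 hw.symm).2 _ _ hlt h'
        exact absurd hdes (by exact not_lt.2 hstab.le)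
  · intro a ha
    obtain ⟨hmono, hdes⟩ : Monotone a ∧ _ := by
      have := (Finset.mem_filter.1 ha).2; exact this
    simp only [Finset.mem_coe, Finset.mem_filter, Finset.mem_univ, true_and]
    have hfw : ((a ∘ ⇑w⁻¹) ∘ ⇑w) = a := by
      funext i; simp
    refine (Tuple.eq_sort_iff.2 ⟨?_, ?_⟩).symm
    · rw [hfw]; exact hmono
    · intro i j hij hval
      rw [show (a ∘ ⇑w⁻¹) (w i) = a i by simp, show (a ∘ ⇑w⁻¹) (w j) = a j by simp] at hval
      refine w_chain_lt w hij ?_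
      intro k hk1 hk2 hd
      obtain ⟨hkn, hwd⟩ := hd
      have hconst : a ⟨k, Nat.lt_of_succ_lt hkn⟩ = a ⟨k + 1, hkn⟩ := by
        have l1 : a i ≤ a ⟨k, Nat.lt_of_succ_lt hkn⟩ := hmono (by
          rw [Fin.le_iff_val_le_val]; exact hk1)
        have l2 : a ⟨k + 1, hkn⟩ ≤ a j := hmono (by
          rw [Fin.le_iff_val_le_val]; show k + 1 ≤ j.val; omega)
        have l3 : a ⟨k, Nat.lt_of_succ_lt hkn⟩ ≤ a ⟨k+1, hkn⟩ := hmono (by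
          rw [Fin.le_iff_val_le_val]; show k ≤ k + 1; omega)
        rw [hval] at l1
        exact le_antisymm l3 (le_trans l2 l1)
      have := hdes k hkn hwd
      rw [hconst] at this
      exact lt_irrefl _ this
  · intro g _; funext i; simp
  · intro a _; funext i; simp




lemma comp_chain {w : Perm (Fin n)} {a : Fin n → Fin K} (ha : a ∈ Comp w K) :
    ∀ (t : ℕ) (i : Fin n) (h : i.val + t < n),
      (a i).val + (dcnt w (i.val + t) - dcnt w i.val) ≤ (a ⟨i.val + t, h⟩).val := by
  obtain ⟨hmono, hdes⟩ : Monotone a ∧ _ := (Finset.mem_filter.1 ha).2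
  intro t
  induction t with
  | zero =>
    intro i h
    have : (⟨i.val + 0, h⟩ : Fin n) = i := Fin.ext (by simp)
    rw [this]; simp
  | succ t ih =>
    intro i h
    have h' : i.val + t < n := by omega
    have h1 := ih i h'
    have hstep : (a ⟨i.val + t, h'⟩).val + (if desP w (i.val + t) then 1 else 0)
        ≤ (a ⟨i.val + (t+1), h⟩).val := by
      by_cases hd : desP w (i.val + t)
      · rw [if_pos hd]
        obtain ⟨hkn, hwd⟩ := hd
        have := hdes (i.val + t) hkn hwd
        rw [Fin.lt_iff_val_lt_val] at this
        have he1 : (⟨i.val + t, Nat.lt_of_succ_lt hkn⟩ : Fin n) = ⟨i.val + t, h'⟩ := rfl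
        have he2 : (⟨i.val + t + 1, hkn⟩ : Fin n) = ⟨i.val + (t+1), h⟩ := rfl
        rw [he1, he2] at this
        omega
      · rw [if_neg hd]
        have hle : (⟨i.val + t, h'⟩ : Fin n) ≤ ⟨i.val + (t+1), h⟩ := by
          rw [Fin.le_iff_val_le_val]; show i.val + t ≤ i.val + (t+1); omega
        have := hmono hle
        rw [Fin.le_iff_val_le_val] at this
        omega
    have hsucc := dcnt_succ w (i.val + t)
    have hmon2 := dcnt_mono w (show i.val ≤ i.val + t by omega)
    show (a i).val + (dcnt w (i.val + t + 1) - dcnt w i.val) ≤ (a ⟨i.val + (t+1), h⟩).val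
    split_ifs at hstep hsucc <;> omega

lemma comp_chain' {w : Perm (Fin n)} {a : Fin n → Fin K} (ha : a ∈ Comp w K)
    (i j : Fin n) (hij : i ≤ j) :
    (a i).val + (dcnt w j.val - dcnt w i.val) ≤ (a j).val := by
  rw [Fin.le_iff_val_le_val] at hij
  have h : i.val + (j.val - i.val) < n := by have := j.isLt; omega
  have hj : (⟨i.val + (j.val - i.val), h⟩ : Fin n) = j := Fin.ext (by
    show i.val + (j.val - i.val) = j.val; omega)
  have := comp_chain ha (j.val - i.val) i h
  rw [hj, show i.val + (j.val - i.val) = j.val by omega] at this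
  exact this

lemma dcnt_zero (w : Perm (Fin n)) : dcnt w 0 = 0 := by simp [dcnt]

lemma comp_empty (hn : 1 ≤ n) (w : Perm (Fin n)) (hK : K < desA w + 1) :
    Comp w K = ∅ := by
  rw [Finset.eq_empty_iff_forall_notMem]
  intro a ha
  have h0n : 0 < n := hn
  have hn1 : n - 1 < n := by omega
  have h1 := comp_chain' ha ⟨0, h0n⟩ ⟨n - 1, hn1⟩
    (by rw [Fin.le_iff_val_le_val]; show 0 ≤ n - 1; omega)
  have e1 : dcnt w ((⟨n - 1, hn1⟩ : Fin n) : ℕ) = desA w := (desA_eq_dcnt w).symm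
  have e2 : dcnt w ((⟨0, h0n⟩ : Fin n) : ℕ) = 0 := dcnt_zero w
  have h2 : ((a ⟨n - 1, hn1⟩ : Fin K)).val < K := (a ⟨n - 1, hn1⟩).isLt
  omega

lemma sm_chain {M : ℕ} {f : Fin n → Fin M} (hf : StrictMono f) :
    ∀ (t : ℕ) (i : Fin n) (h : i.val + t < n), (f i).val + t ≤ (f ⟨i.val + t, h⟩).val := by
  intro t
  induction t with
  | zero =>
    intro i h
    have : (⟨i.val + 0, h⟩ : Fin n) = i := Fin.ext (by simp)
    rw [this]; simp
  | succ t ih =>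
    intro i h
    have h' : i.val + t < n := by omega
    have h1 := ih i h'
    have h2 : (⟨i.val + t, h'⟩ : Fin n) < ⟨i.val + (t+1), h⟩ := by
      rw [Fin.lt_iff_val_lt_val]; show i.val + t < i.val + (t+1); omega
    have := hf h2
    rw [Fin.lt_iff_val_lt_val] at this
    omega

lemma sm_chain' {M : ℕ} {f : Fin n → Fin M} (hf : StrictMono f)
    (i j : Fin n) (hij : i ≤ j) : (f i).val + (j.val - i.val) ≤ (f j).val := by
  rw [Fin.le_iff_val_le_val] at hij
  have h : i.val + (j.val - i.val) < n := by have := j.isLt; omega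
  have hj : (⟨i.val + (j.val - i.val), h⟩ : Fin n) = j := Fin.ext (by
    show i.val + (j.val - i.val) = j.val; omega)
  have := sm_chain hf (j.val - i.val) i h
  rw [hj] at this
  exact this

lemma comp_card (hn : 1 ≤ n) (w : Perm (Fin n)) (hK : desA w + 1 ≤ K) :
    (Comp w K).card = (K - (desA w + 1) + n).choose n := by
  set d := desA w with hd
  set M := K - (d + 1) + n with hMdef
  have hMpos : 0 < M := by omega
  have hKpos : 0 < K := by omega
  have hdlast : dcnt w (n - 1) = d := (desA_eq_dcnt w).symm
  have hdle : ∀ j : Fin n, dcnt w j.val ≤ d := by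
    intro j
    rw [← hdlast]
    exact dcnt_mono w (by have := j.isLt; omega)
  -- forward map (total, with dummy fallback)
  set cm : (Fin n → Fin K) → Fin n → Fin M := fun a j =>
    if h : (a j).val + j.val - dcnt w j.val < M then ⟨(a j).val + j.val - dcnt w j.val, h⟩
    else ⟨0, hMpos⟩ with hcm
  set am : Finset (Fin M) → Fin n → Fin K := fun s j =>
    if hs : s.card = n then
      (if h2 : (s.orderEmbOfFin hs j).val + dcnt w j.val - j.val < K then
        ⟨(s.orderEmbOfFin hs j).val + dcnt w j.val - j.val, h2⟩ else ⟨0, hKpos⟩)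
    else ⟨0, hKpos⟩ with ham
  have hn1 : n - 1 < n := by omega
  have hbound : ∀ a ∈ Comp w K, ∀ j : Fin n, (a j).val + j.val - dcnt w j.val < M := by
    intro a ha j
    have h1 := comp_chain' ha j ⟨n - 1, hn1⟩
      (by rw [Fin.le_iff_val_le_val]; show j.val ≤ n - 1; have := j.isLt; omega)
    have e1 : dcnt w ((⟨n - 1, hn1⟩ : Fin n) : ℕ) = d := hdlast
    have h2 : ((a ⟨n - 1, hn1⟩ : Fin K)).val < K := (a ⟨n - 1, hn1⟩).isLt
    have h3 := dcnt_le w j.val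
    have h4 := hdle j
    have h5 := j.isLt
    omega
  have hsm : ∀ a ∈ Comp w K, StrictMono (cm a) := by
    intro a ha i j hij
    have hb_i := hbound a ha i
    have hb_j := hbound a ha j
    rw [hcm]
    dsimp only
    rw [dif_pos hb_i, dif_pos hb_j]
    rw [Fin.lt_iff_val_lt_val] at hij ⊢
    show (a i).val + i.val - dcnt w i.val < (a j).val + j.val - dcnt w j.val
    have hch := comp_chain' ha i j (by rw [Fin.le_iff_val_le_val]; omega)
    have h3 := dcnt_le w i.val
    have h5 := dcnt_add_le w i.val (j.val - i.val)
    rw [show i.val + (j.val - i.val) = j.val by omega] at h5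
    omega
  have hcmval : ∀ a ∈ Comp w K, ∀ j : Fin n,
      (cm a j).val = (a j).val + j.val - dcnt w j.val := by
    intro a ha j
    rw [hcm]
    dsimp only
    rw [dif_pos (hbound a ha j)]
  -- the am bound
  have hambound : ∀ (s : Finset (Fin M)) (hs : s.card = n) (j : Fin n),
      (s.orderEmbOfFin hs j).val + dcnt w j.val - j.val < K := by
    intro s hs j
    have he : StrictMono (s.orderEmbOfFin hs) := (s.orderEmbOfFin hs).strictMono
    have h1 := sm_chain' he j ⟨n - 1, hn1⟩
      (by rw [Fin.le_iff_val_le_val]; show j.val ≤ n - 1; have := j.isLt; omega)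
    have e4 : ((⟨n - 1, hn1⟩ : Fin n) : ℕ) = n - 1 := rfl
    have h2 : ((s.orderEmbOfFin hs ⟨n - 1, hn1⟩ : Fin M)).val < M :=
      (s.orderEmbOfFin hs ⟨n - 1, hn1⟩).isLt
    have h3 := dcnt_le w j.val
    have h4 := hdle j
    have h5 := j.isLt
    omega
  have hamval : ∀ (s : Finset (Fin M)) (hs : s.card = n) (j : Fin n),
      (am s j).val = (s.orderEmbOfFin hs j).val + dcnt w j.val - j.val := by
    intro s hs j
    rw [ham]
    dsimp only
    rw [dif_pos hs, dif_pos (hambound s hs j)]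
  have hege : ∀ (s : Finset (Fin M)) (hs : s.card = n) (j : Fin n),
      j.val ≤ (s.orderEmbOfFin hs j).val := by
    intro s hs j
    have he : StrictMono (s.orderEmbOfFin hs) := (s.orderEmbOfFin hs).strictMono
    have h0n : 0 < n := by omega
    have h1 := sm_chain' he ⟨0, h0n⟩ j (by rw [Fin.le_iff_val_le_val]; show 0 ≤ j.val; omega)
    have e0 : ((⟨0, h0n⟩ : Fin n) : ℕ) = 0 := rfl
    omega
  -- rewrite RHS as card of powersetCard
  have hcu : (univ : Finset (Fin M)).card = M := by simp
  rw [show (K - (d + 1) + n).choose n = (Finset.powersetCard n (univ : Finset (Fin M))).card by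
    rw [Finset.card_powersetCard, hcu]]
  refine Finset.card_bij' (fun a _ => Finset.image (cm a) univ) (fun s _ => am s)
    ?_ ?_ ?_ ?_
  · intro a ha
    rw [Finset.mem_powersetCard]
    constructor
    · exact Finset.subset_univ _
    · rw [Finset.card_image_of_injective _ (hsm a ha).injective]
      simp
  · intro s hs
    obtain ⟨_, hcard⟩ := Finset.mem_powersetCard.1 hs
    simp only [Comp, Finset.mem_filter, Finset.mem_univ, true_and]
    constructor
    · intro i j hij
      rw [Fin.le_iff_val_le_val, hamval s hcard i, hamval s hcard j]
      have h1 := sm_chain' (s.orderEmbOfFin hcard).strictMono i j hij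
      rw [Fin.le_iff_val_le_val] at hij
      have h2 := dcnt_mono w (show i.val ≤ j.val from hij)
      have h3 := dcnt_le w i.val
      have h4 := hege s hcard i
      omega
    · intro i h hdes
      rw [Fin.lt_iff_val_lt_val, hamval s hcard _, hamval s hcard _]
      have hPi : desP w i := ⟨h, hdes⟩
      have hsucc := dcnt_succ w i
      rw [if_pos hPi] at hsucc
      have hlt : (⟨i, Nat.lt_of_succ_lt h⟩ : Fin n) < ⟨i + 1, h⟩ := by
        rw [Fin.lt_iff_val_lt_val]; show i < i + 1; omega
      have h1 := sm_chain' (s.orderEmbOfFin hcard).strictMono _ _ hlt.le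
      have h4 := hege s hcard ⟨i, Nat.lt_of_succ_lt h⟩
      have hv1 : ((⟨i, Nat.lt_of_succ_lt h⟩ : Fin n) : ℕ) = i := rfl
      have hv2 : ((⟨i + 1, h⟩ : Fin n) : ℕ) = i + 1 := rfl
      have eb1 : dcnt w ((⟨i, Nat.lt_of_succ_lt h⟩ : Fin n) : ℕ) = dcnt w i := rfl
      have eb2 : dcnt w ((⟨i + 1, h⟩ : Fin n) : ℕ) = dcnt w (i + 1) := rfl
      omega
  · intro a ha
    have hcard : (Finset.image (cm a) univ).card = n := by
      rw [Finset.card_image_of_injective _ (hsm a ha).injective]; simp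
    have hmem : ∀ i : Fin n, cm a i ∈ Finset.image (cm a) univ :=
      fun i => Finset.mem_image_of_mem _ (Finset.mem_univ i)
    have hes : cm a = ⇑((Finset.image (cm a) univ).orderEmbOfFin hcard) :=
      Finset.orderEmbOfFin_unique hcard hmem (hsm a ha)
    funext j
    apply Fin.ext
    rw [hamval _ hcard j, ← hes, hcmval a ha j]
    have h3 := dcnt_le w j.val
    have h5 := j.isLt
    omega
  · intro s hs
    obtain ⟨_, hcard⟩ := Finset.mem_powersetCard.1 hs
    have hcmam : cm (am s) = ⇑(s.orderEmbOfFin hcard) := by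
      funext j
      have hval : (am s j).val + j.val - dcnt w j.val = (s.orderEmbOfFin hcard j).val := by
        rw [hamval s hcard j]
        have h3 := dcnt_le w j.val
        have h4 := hege s hcard j
        omega
      have hb : (am s j).val + j.val - dcnt w j.val < M := by
        rw [hval]; exact (s.orderEmbOfFin hcard j).isLt
      apply Fin.ext
      rw [hcm]
      dsimp only
      rw [dif_pos hb]
      exact hval
    show Finset.image (cm (am s)) univ = s
    rw [hcmam]
    apply Finset.coe_injective
    rw [Finset.coe_image, Finset.coe_univ, Set.image_univ]
    exact Finset.range_orderEmbOfFin s hcard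




lemma fiber_card_eq (hn : 1 ≤ n) (w : Perm (Fin n)) (K : ℕ) :
    (((univ : Finset (Fin n → Fin K)).filter (fun g => Tuple.sort g = w)).card : ℚ)
      = if desA w + 1 ≤ K then ((K - (desA w + 1) + n).choose n : ℚ) else 0 := by
  rw [fiber_card]
  split_ifs with h
  · rw [comp_card hn w h]
  · rw [comp_empty hn w (by omega)]
    simp

theorem main_count (hn : 1 ≤ n) (K : ℕ) :
    ∑ w : Perm (Fin n), ((sign w : ℤ) : ℚ) *
      (if desA w + 1 ≤ K then ((K - (desA w + 1) + n).choose n : ℚ) else 0)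
    = (K : ℚ) ^ ((n + 1) / 2) := by
  rw [← sum_eps hn K]
  rw [← Finset.sum_fiberwise univ (fun g : Fin n → Fin K => Tuple.sort g) (fun g => eps g)]
  apply Finset.sum_congr rfl
  intro w _
  have h1 : ∑ g ∈ univ.filter (fun g : Fin n → Fin K => Tuple.sort g = w), eps g
      = ∑ _g ∈ univ.filter (fun g : Fin n → Fin K => Tuple.sort g = w), ((sign w : ℤ) : ℚ) := by
    apply Finset.sum_congr rfl
    intro g hg
    rw [eps, (Finset.mem_filter.1 hg).2]
  rw [h1, Finset.sum_const, nsmul_eq_mul, ← fiber_card_eq hn w K, mul_comm]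

end SE


open PowerSeries

theorem signed_eulerian_series (n : ℕ) (hn : 1 ≤ n) :
    ∑ w : Equiv.Perm (Fin n),
        (((Equiv.Perm.sign w : ℤ) : ℚ)) • (PowerSeries.X : PowerSeries ℚ) ^ (desA w + 1)
      = (1 - PowerSeries.X) ^ (n + 1) *
          PowerSeries.mk (fun k => (k : ℚ) ^ ((n + 1) / 2)) := by
  classical
  set F : PowerSeries ℚ := ∑ w : Equiv.Perm (Fin n),
    (((Equiv.Perm.sign w : ℤ) : ℚ)) • (PowerSeries.X : PowerSeries ℚ) ^ (desA w + 1) with hF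
  have hkey : F * (PowerSeries.mk fun j => ((n + j).choose n : ℚ))
      = PowerSeries.mk (fun k => (k : ℚ) ^ ((n + 1) / 2)) := by
    ext KK
    rw [PowerSeries.coeff_mul, PowerSeries.coeff_mk]
    have hstep : ∀ p ∈ Finset.HasAntidiagonal.antidiagonal KK,
        (PowerSeries.coeff p.1) F * (PowerSeries.coeff p.2)
            (PowerSeries.mk fun j => ((n + j).choose n : ℚ))
        = ∑ w : Equiv.Perm (Fin n), ((Equiv.Perm.sign w : ℤ) : ℚ) *
            ((if p.1 = desA w + 1 then 1 else 0) * ((n + p.2).choose n : ℚ)) := by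
      intro p _
      rw [hF, map_sum, PowerSeries.coeff_mk, Finset.sum_mul]
      apply Finset.sum_congr rfl
      intro w _
      rw [map_smul, PowerSeries.coeff_X_pow, smul_eq_mul]
      ring
    rw [Finset.sum_congr rfl hstep, Finset.sum_comm]
    rw [← SE.main_count hn KK]
    apply Finset.sum_congr rfl
    intro w _
    rw [← Finset.mul_sum]
    congr 1
    rw [Finset.Nat.sum_antidiagonal_eq_sum_range_succ_mk]
    simp only [ite_mul, one_mul, zero_mul]
    rw [Finset.sum_ite_eq' (Finset.range (KK + 1)) (desA w + 1)
      (fun k => ((n + (KK - k)).choose n : ℚ))]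
    by_cases h1 : desA w + 1 ≤ KK
    · rw [if_pos (Finset.mem_range.2 (by omega)), if_pos h1, Nat.add_comm]
    · rw [if_neg (fun hc => h1 (by have := Finset.mem_range.1 hc; omega)), if_neg h1]
  symm
  calc (1 - PowerSeries.X) ^ (n + 1) *
          PowerSeries.mk (fun k => (k : ℚ) ^ ((n + 1) / 2))
      = F * ((PowerSeries.mk fun j => ((n + j).choose n : ℚ)) *
          (1 - PowerSeries.X) ^ (n + 1)) := by rw [← hkey]; ring
    _ = F := by
        rw [PowerSeries.mk_add_choose_mul_one_sub_pow_eq_one, mul_one]
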